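/- Let K ≥ 1 be an integer, λ > 0 a real, and for each k = 1,…,K let m_k ≥ 1, n_k ≥ m_k be integers, μ_k > 0 a real, and φ_k : [0,∞) → ℝ be defined by φ_k(0) = 0 and φ_k(t) = t·B_{m_k,n_k}(t/μ_k) for t > 0; each φ_k is continuously differentiable on [0,∞). A feasible point (λ_1*,…,λ_K*), i.e., one with λ_k* ∈ [0,λ] for each k and ∑_k λ_k* = λ, minimizes ∑_{k=1}^K φ_k(λ_k) over the feasible set if and only if there exists a real y* such that for every k: φ_k'(λ_k*) ≥ y* if λ_k* = 0; φ_k'(λ_k*) = y* if 0 < λ_k* < λ; and φ_k'(λ_k*) ≤ y* if λ_k* = λ. -/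

import Mathlib

/-- `a_j(r)` coefficients of the M/M/m/n queue. -/
noncomputable def aCoef (m j : ℕ) (r : ℝ) : ℝ :=
  if j ≤ m then r ^ j / (Nat.factorial j : ℝ)
  else (r ^ m / (Nat.factorial m : ℝ)) * (r / (m : ℝ)) ^ (j - m)

/-- Blocking probability `B_{m,n}(r)` of the M/M/m/n queue with offered load `r`. -/
noncomputable def Bmn (m n : ℕ) (r : ℝ) : ℝ :=
  aCoef m n r / ∑ j ∈ Finset.range (n + 1), aCoef m j r

/-- Mean number in system `L_{m,n}(r)` of the M/M/m/n queue with offered load `r`. -/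
noncomputable def Lmn (m n : ℕ) (r : ℝ) : ℝ :=
  (∑ j ∈ Finset.range (n + 1), (j : ℝ) * aCoef m j r) /
    ∑ j ∈ Finset.range (n + 1), aCoef m j r

/-- Erlang-B formula `B_m(r)`. -/
noncomputable def erlangB (m : ℕ) (r : ℝ) : ℝ :=
  (r ^ m / (Nat.factorial m : ℝ)) / ∑ j ∈ Finset.range (m + 1), r ^ j / (Nat.factorial j : ℝ)


section QueueAuxA
open Finset

/-- Nat identity: `∑_{p<s} 6 p (s-p) = (s-1) s (s+1)`. -/
lemma sum_six_mul (s : ℕ) : ∑ p ∈ range s, 6 * p * (s - p) = (s - 1) * s * (s + 1) := by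
  induction s with
  | zero => simp
  | succ s ih =>
    rw [Finset.sum_range_succ]
    have h : ∀ p ∈ range s, 6 * p * (s + 1 - p) = 6 * p * (s - p) + 6 * p := by
      intro p hp
      have hps : p < s := Finset.mem_range.1 hp
      have : s + 1 - p = (s - p) + 1 := by omega
      rw [this]; ring
    rw [Finset.sum_congr rfl h, Finset.sum_add_distrib, ih, ← Finset.mul_sum]
    have g2 : (∑ i ∈ range s, i) * 2 = s * (s - 1) := Finset.sum_range_id_mul_two s
    cases s with
    | zero => simp
    | succ t =>
      have e1 : t + 1 + 1 - (t + 1) = 1 := by omega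
      rw [e1]
      simp only [Nat.succ_sub_one] at g2 ⊢
      nlinarith [g2]

/-- Per-`s` Chebyshev step. -/
lemma per_s_cheb (s : ℕ) (hs : 2 ≤ s) (w kk : ℕ → ℝ)
    (hzero : ∑ p ∈ Icc 1 (s - 1), kk p = 0)
    (hmono : MonovaryOn w kk (Icc 1 (s - 1))) :
    0 ≤ ∑ p ∈ Icc 1 (s - 1), w p * kk p := by
  have hcheb := hmono.sum_mul_sum_le_card_mul_sum
  rw [hzero, mul_zero] at hcheb
  have hcard : (0:ℝ) < #(Icc 1 (s - 1)) := by
    rw [Nat.card_Icc]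
    have : s - 1 + 1 - 1 = s - 1 := by omega
    rw [this]
    have : 1 ≤ s - 1 := by omega
    exact_mod_cast Nat.lt_of_lt_of_le Nat.zero_lt_one this
  nlinarith [hcheb, hcard]

/-- Core quadratic-form inequality for log-concave nonnegative sequences. -/
lemma core_ineq (N : ℕ) (x : ℕ → ℝ)
    (hx0 : ∀ p, 0 ≤ x p) (hx00 : x 0 = 0) (hxN : ∀ p, N < p → x p = 0)
    (hspread : ∀ a a' b' b : ℕ, a ≤ a' → a' ≤ b' → b' ≤ b → a + b = a' + b' →
      x a * x b ≤ x a' * x b') :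
    (∑ p ∈ range (N + 1), x p) * (∑ p ∈ range (N + 1), ((p : ℝ) * (p + 1)) * x p)
      ≤ 2 * (∑ p ∈ range (N + 1), (p : ℝ) * x p) ^ 2 := by
  set M := N + 1 with hM
  -- the quadratic form as a double sum
  set f : ℕ → ℕ → ℝ := fun p q =>
    x p * x q * (2 * (p : ℝ) * q - (q : ℝ) * q - q) with hf
  have hfzero : ∀ p q : ℕ, M ≤ p ∨ M ≤ q → f p q = 0 := by
    intro p q hpq
    rcases hpq with h | h
    · simp [hf, hxN p (by omega)]
    · simp [hf, hxN q (by omega)]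
  have key : 2 * (∑ p ∈ range M, (p : ℝ) * x p) ^ 2
      - (∑ p ∈ range M, x p) * (∑ p ∈ range M, ((p : ℝ) * (p + 1)) * x p)
      = ∑ p ∈ range M, ∑ q ∈ range M, f p q := by
    rw [sq, Finset.sum_mul_sum, Finset.sum_mul_sum, Finset.mul_sum, ← Finset.sum_sub_distrib]
    refine Finset.sum_congr rfl fun p _ => ?_
    rw [Finset.mul_sum, ← Finset.sum_sub_distrib]
    refine Finset.sum_congr rfl fun q _ => ?_
    simp only [hf]; ring
  rw [← sub_nonneg, key]
  -- reindex the double sum along antidiagonals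
  have reindex : ∑ p ∈ range M, ∑ q ∈ range M, f p q
      = ∑ s ∈ range (2 * M), ∑ p ∈ range (s + 1), f p (s - p) := by
    have e1 : ∑ p ∈ range M, ∑ q ∈ range M, f p q
        = ∑ z ∈ range M ×ˢ range M, f z.1 z.2 := by
      rw [Finset.sum_product]
    have e2 : ∀ s, ∑ p ∈ range (s + 1), f p (s - p)
        = ∑ z ∈ Finset.HasAntidiagonal.antidiagonal s, f z.1 z.2 := by
      intro s
      rw [Finset.Nat.sum_antidiagonal_eq_sum_range_succ_mk]
    have e3 : ∑ s ∈ range (2 * M), ∑ z ∈ Finset.HasAntidiagonal.antidiagonal s, f z.1 z.2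
        = ∑ z ∈ (range (2 * M)).biUnion (fun s => Finset.HasAntidiagonal.antidiagonal s), f z.1 z.2 := by
      rw [Finset.sum_biUnion]
      intro s _ t _ hst
      simp only [Finset.disjoint_left]
      intro z hz hz'
      rw [Finset.HasAntidiagonal.mem_antidiagonal] at hz hz'
      exact hst (hz ▸ hz')
    rw [e1]
    have e2' : ∑ s ∈ range (2 * M), ∑ p ∈ range (s + 1), f p (s - p)
        = ∑ s ∈ range (2 * M), ∑ z ∈ Finset.HasAntidiagonal.antidiagonal s, f z.1 z.2 :=
      Finset.sum_congr rfl fun s _ => e2 s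
    rw [e2', e3]
    have big : range M ×ˢ range M ⊆ range (2 * M) ×ˢ range (2 * M) :=
      Finset.product_subset_product (Finset.range_subset_range.2 (by omega))
        (Finset.range_subset_range.2 (by omega))
    have sub2 : (range (2 * M)).biUnion (fun s => Finset.HasAntidiagonal.antidiagonal s)
        ⊆ range (2 * M) ×ˢ range (2 * M) := by
      intro z hz
      rw [Finset.mem_biUnion] at hz
      obtain ⟨s, hs, hz⟩ := hz
      rw [Finset.HasAntidiagonal.mem_antidiagonal] at hz
      rw [Finset.mem_range] at hs
      simp only [Finset.mem_product, Finset.mem_range]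
      omega
    rw [Finset.sum_subset big, Finset.sum_subset sub2]
    · intro z hz hz'
      rw [Finset.mem_product, Finset.mem_range, Finset.mem_range] at hz
      rw [Finset.mem_biUnion] at hz'
      push_neg at hz'
      have : 2 * M ≤ z.1 + z.2 := by
        by_contra hcon
        exact hz' (z.1 + z.2) (Finset.mem_range.2 (by omega))
          (Finset.HasAntidiagonal.mem_antidiagonal.2 rfl)
      exact hfzero z.1 z.2 (by omega)
    · intro z hz hz'
      rw [Finset.mem_product, Finset.mem_range, Finset.mem_range] at hz
      rw [Finset.mem_product, Finset.mem_range, Finset.mem_range] at hz'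
      push_neg at hz'
      exact hfzero z.1 z.2 (by omega)
  rw [reindex]
  refine Finset.sum_nonneg fun s _ => ?_
  -- per-antidiagonal nonnegativity
  set w : ℕ → ℝ := fun p => x p * x (s - p) with hw
  set kk : ℕ → ℝ := fun p => 6 * (p : ℝ) * ((s : ℝ) - p) - (s : ℝ) ^ 2 - s with hkk
  have hrefl : ∑ p ∈ range (s + 1), f (s - p) p = ∑ p ∈ range (s + 1), f p (s - p) := by
    have := Finset.sum_range_reflect (fun j => f (s - j) j) (s + 1)
    simp only [Nat.add_sub_cancel] at this
    rw [← this]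
    refine Finset.sum_congr rfl fun p hp => ?_
    rw [Finset.mem_range] at hp
    have h1 : s - (s - p) = p := by omega
    rw [h1]
  have hdouble : 2 * ∑ p ∈ range (s + 1), f p (s - p)
      = ∑ p ∈ range (s + 1), w p * kk p := by
    rw [two_mul]
    nth_rewrite 1 [← hrefl]
    rw [← Finset.sum_add_distrib]
    refine Finset.sum_congr rfl fun p hp => ?_
    rw [Finset.mem_range] at hp
    have hps : p ≤ s := by omega
    have hc : ((s - p : ℕ) : ℝ) = (s : ℝ) - p := by
      push_cast [Nat.cast_sub hps]; ring
    simp only [hf, hw, hkk, hc]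
    ring
  have main : 0 ≤ ∑ p ∈ range (s + 1), w p * kk p := by
    have hIcc : ∑ p ∈ range (s + 1), w p * kk p = ∑ p ∈ Icc 1 (s - 1), w p * kk p := by
      symm
      refine Finset.sum_subset ?_ ?_
      · intro p hp
        rw [Finset.mem_Icc] at hp
        rw [Finset.mem_range]
        omega
      · intro p hp hp'
        rw [Finset.mem_range] at hp
        rw [Finset.mem_Icc] at hp'
        have : p = 0 ∨ p = s := by omega
        rcases this with h | h
        · simp [hw, h, hx00]
        · have : s - p = 0 := by omega
          simp [hw, h, this, hx00]
    rcases Nat.lt_or_ge s 2 with hs | hs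
    · rw [hIcc]
      have : s - 1 < 1 ∨ s - 1 = 1 ∧ s = 2 := by omega
      interval_cases s
      · simp
      · simp
    · rw [hIcc]
      refine per_s_cheb s hs w kk ?_ ?_
      · -- sum of coefficients vanishes
        have cast6 : ∑ p ∈ Icc 1 (s - 1), 6 * (p : ℝ) * ((s : ℝ) - p)
            = (((s - 1) * s * (s + 1) : ℕ) : ℝ) := by
          rw [← sum_six_mul s]
          have hsub : Icc 1 (s - 1) ⊆ range s := by
            intro p hp; rw [Finset.mem_Icc] at hp; rw [Finset.mem_range]; omega
          rw [← Finset.sum_subset hsub (fun p hp hp' => ?_)]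
          · rw [Nat.cast_sum]
            refine Finset.sum_congr rfl fun p hp => ?_
            rw [Finset.mem_Icc] at hp
            have hps : p ≤ s := by omega
            push_cast [Nat.cast_sub hps]
            ring
          · rw [Finset.mem_range] at hp
            rw [Finset.mem_Icc] at hp'
            have : p = 0 := by omega
            subst this
            simp
        simp only [hkk]
        rw [Finset.sum_sub_distrib, Finset.sum_sub_distrib, cast6]
        rw [Finset.sum_const, Finset.sum_const, Nat.card_Icc]
        have hc : s - 1 + 1 - 1 = s - 1 := by omega
        rw [hc]
        have h1 : ((s - 1 : ℕ) : ℝ) = (s : ℝ) - 1 := by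
          push_cast [Nat.cast_sub (by omega : 1 ≤ s)]; ring
        have h2 : (((s - 1) * s * (s + 1) : ℕ) : ℝ) = ((s : ℝ) - 1) * s * (s + 1) := by
          push_cast [Nat.cast_sub (by omega : 1 ≤ s)]; ring
        rw [h2]
        simp only [nsmul_eq_mul, h1]
        ring
      · -- monovariance
        intro i hi j hj hlt
        simp only [Finset.coe_Icc, Set.mem_Icc] at hi hj
        simp only [hkk] at hlt
        have his : i ≤ s := by omega
        have hjs : j ≤ s := by omega
        have hci : ((s - i : ℕ) : ℝ) = (s : ℝ) - i := by push_cast [Nat.cast_sub his]; ring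
        have hcj : ((s - j : ℕ) : ℝ) = (s : ℝ) - j := by push_cast [Nat.cast_sub hjs]; ring
        have hnat : i * (s - i) < j * (s - j) := by
          have : (↑(i * (s - i)) : ℝ) < ↑(j * (s - j)) := by
            push_cast [hci, hcj]
            nlinarith [hlt]
          exact_mod_cast this
        set a := min i (s - i) with ha
        set b := max i (s - i) with hb
        set a' := min j (s - j) with ha'
        set b' := max j (s - j) with hb'
        have hab : a + b = s := by omega
        have hab' : a' + b' = s := by omega
        have hprod : a * b < a' * b' := by
          have e1 : a * b = i * (s - i) := by
            rcases le_total i (s - i) with h | h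
            · rw [ha, hb, min_eq_left h, max_eq_right h]
            · rw [ha, hb, min_eq_right h, max_eq_left h, Nat.mul_comm]
          have e2 : a' * b' = j * (s - j) := by
            rcases le_total j (s - j) with h | h
            · rw [ha', hb', min_eq_left h, max_eq_right h]
            · rw [ha', hb', min_eq_right h, max_eq_left h, Nat.mul_comm]
          omega
        have haa' : a ≤ a' := by
          by_contra hcon
          push_neg at hcon
          have h1 : a' < a := hcon
          have h2 : a ≤ b := min_le_max
          have h3 : a' ≤ b' := min_le_max
          nlinarith [hprod, hab, hab']
        have hbb' : b' ≤ b := by omega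
        have ha'b' : a' ≤ b' := min_le_max
        have hwi : w i = x a * x b := by
          rcases le_total i (s - i) with h | h
          · rw [hw]; simp only; rw [ha, hb, min_eq_left h, max_eq_right h]
          · rw [hw]; simp only; rw [ha, hb, min_eq_right h, max_eq_left h, mul_comm]
        have hwj : w j = x a' * x b' := by
          rcases le_total j (s - j) with h | h
          · rw [hw]; simp only; rw [ha', hb', min_eq_left h, max_eq_right h]
          · rw [hw]; simp only; rw [ha', hb', min_eq_right h, max_eq_left h, mul_comm]
        rw [hwi, hwj]
        exact hspread a a' b' b haa' ha'b' hbb' (by omega)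
  linarith [hdouble, main]

/-- Denominator `c_j` of the queueing coefficients. -/
noncomputable def cdenom (m j : ℕ) : ℝ :=
  if j ≤ m then (Nat.factorial j : ℝ) else (Nat.factorial m : ℝ) * (m : ℝ) ^ (j - m)

lemma cdenom_pos (m j : ℕ) (hm : 1 ≤ m) : 0 < cdenom m j := by
  have hmpos : (0:ℝ) < m := by exact_mod_cast hm
  unfold cdenom
  split
  · exact_mod_cast Nat.factorial_pos j
  · have h1 : (0:ℝ) < Nat.factorial m := by exact_mod_cast Nat.factorial_pos m
    positivity

lemma cdenom_succ (m j : ℕ) (hm : 1 ≤ m) :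
    cdenom m (j + 1) = (min (j + 1) m : ℕ) * cdenom m j := by
  unfold cdenom
  rcases Nat.lt_or_ge j m with h | h
  · rw [if_pos (by omega : j ≤ m), if_pos (by omega : j + 1 ≤ m), min_eq_left (by omega : j + 1 ≤ m)]
    push_cast [Nat.factorial_succ]
    ring
  · rw [min_eq_right (by omega : m ≤ j + 1), if_neg (by omega : ¬ (j + 1 ≤ m))]
    rcases Nat.eq_or_lt_of_le h with h2 | h2
    · rw [if_pos (le_of_eq h2.symm), ← h2]
      have : m + 1 - m = 1 := by omega
      rw [this]
      ring
    · rw [if_neg (by omega : ¬ (j ≤ m))]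
      have : j + 1 - m = (j - m) + 1 := by omega
      rw [this, pow_succ]
      ring

/-- spreading decreases products of `cdenom` (log-convexity). -/
lemma cdenom_step (m i j : ℕ) (hm : 1 ≤ m) (hij : i ≤ j) :
    cdenom m (i + 1) * cdenom m j ≤ cdenom m i * cdenom m (j + 1) := by
  rw [cdenom_succ m i hm, cdenom_succ m j hm]
  have h1 : (min (i + 1) m : ℕ) ≤ (min (j + 1) m : ℕ) := by omega
  have h1' : ((min (i + 1) m : ℕ) : ℝ) ≤ ((min (j + 1) m : ℕ) : ℝ) := by exact_mod_cast h1
  have h2 := (cdenom_pos m i hm).le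
  have h3 := (cdenom_pos m j hm).le
  calc (min (i + 1) m : ℕ) * cdenom m i * cdenom m j
      ≤ ((min (j + 1) m : ℕ) : ℝ) * cdenom m i * cdenom m j := by
        apply mul_le_mul_of_nonneg_right (mul_le_mul_of_nonneg_right h1' h2) h3
    _ = cdenom m i * ((min (j + 1) m : ℕ) * cdenom m j) := by ring

lemma cdenom_spread (m : ℕ) (hm : 1 ≤ m) :
    ∀ d i j', i + d ≤ j' → cdenom m (i + d) * cdenom m j' ≤ cdenom m i * cdenom m (j' + d) := by
  intro d
  induction d with
  | zero => intro i j' _; simp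
  | succ d ih =>
    intro i j' hle
    have step := cdenom_step m (i + d) j' hm (by omega)
    have ihh := ih i (j' + 1) (by omega)
    have hpos := cdenom_pos m j' hm
    calc cdenom m (i + (d + 1)) * cdenom m j'
        = cdenom m ((i + d) + 1) * cdenom m j' := by ring_nf
      _ ≤ cdenom m (i + d) * cdenom m (j' + 1) := step
      _ ≤ cdenom m i * cdenom m ((j' + 1) + d) := ihh
      _ = cdenom m i * cdenom m (j' + (d + 1)) := by ring_nf

/-- general spreading form. -/
lemma cdenom_spread' (m : ℕ) (hm : 1 ≤ m) (i i' j' j : ℕ)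
    (h1 : i ≤ i') (h2 : i' ≤ j') (h3 : j' ≤ j) (h4 : i + j = i' + j') :
    cdenom m i' * cdenom m j' ≤ cdenom m i * cdenom m j := by
  obtain ⟨d, hd⟩ : ∃ d, i' = i + d := ⟨i' - i, by omega⟩
  have hj : j = j' + d := by omega
  subst hd hj
  exact cdenom_spread m hm d i j' h2

/-- `aCoef` in closed form. -/
lemma aCoef_eq (m j : ℕ) (r : ℝ) (hm : 1 ≤ m) :
    aCoef m j r = r ^ j / cdenom m j := by
  unfold aCoef cdenom
  split
  · rfl
  · rename_i h
    have hj : m ≤ j := by omega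
    have hmr : (m:ℝ) ≠ 0 := by positivity
    have hfact : (Nat.factorial m : ℝ) ≠ 0 := by exact_mod_cast (Nat.factorial_pos m).ne'
    rw [div_pow, div_mul_div_comm, ← pow_add]
    have : m + (j - m) = j := by omega
    rw [this]

noncomputable def eCoef (m n p : ℕ) : ℝ := cdenom m n / cdenom m (n + 1 - p)

lemma eCoef_pos (m n p : ℕ) (hm : 1 ≤ m) : 0 < eCoef m n p :=
  div_pos (cdenom_pos m n hm) (cdenom_pos m _ hm)

noncomputable def Sq (m n : ℕ) (r : ℝ) : ℝ :=
  ∑ p ∈ Icc 1 (n + 1), eCoef m n p * r ^ (-(p : ℤ))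

noncomputable def Sq1 (m n : ℕ) (r : ℝ) : ℝ :=
  ∑ p ∈ Icc 1 (n + 1), eCoef m n p * ((Int.cast (-(p : ℤ)) : ℝ) * r ^ (-(p : ℤ) - 1))

noncomputable def Sq2 (m n : ℕ) (r : ℝ) : ℝ :=
  ∑ p ∈ Icc 1 (n + 1), eCoef m n p *
    ((Int.cast (-(p : ℤ)) : ℝ) * ((Int.cast (-(p : ℤ) - 1) : ℝ) * r ^ (-(p : ℤ) - 1 - 1)))

lemma Sq_pos (m n : ℕ) (r : ℝ) (hm : 1 ≤ m) (hr : 0 < r) : 0 < Sq m n r := by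
  unfold Sq
  apply Finset.sum_pos
  · intro p _
    exact mul_pos (eCoef_pos m n p hm) (zpow_pos hr _)
  · exact ⟨1, by simp⟩

lemma hasDerivAt_Sq (m n : ℕ) (r : ℝ) (hr : r ≠ 0) :
    HasDerivAt (Sq m n) (Sq1 m n r) r := by
  unfold Sq Sq1
  apply HasDerivAt.fun_sum
  intro p _
  exact (hasDerivAt_zpow (-(p:ℤ)) r (Or.inl hr)).const_mul _

lemma hasDerivAt_Sq1 (m n : ℕ) (r : ℝ) (hr : r ≠ 0) :
    HasDerivAt (Sq1 m n) (Sq2 m n r) r := by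
  unfold Sq1 Sq2
  apply HasDerivAt.fun_sum
  intro p _
  exact ((hasDerivAt_zpow (-(p:ℤ) - 1) r (Or.inl hr)).const_mul _).const_mul _

/-- the key sign inequality. -/
lemma key_sign (m n : ℕ) (hm : 1 ≤ m) (r : ℝ) (hr : 0 < r) :
    Sq m n r * Sq2 m n r ≤ 2 * Sq1 m n r ^ 2 := by
  have hrne : r ≠ 0 := ne_of_gt hr
  set N := n + 1 with hN
  set x : ℕ → ℝ := fun p => if 1 ≤ p ∧ p ≤ N then eCoef m n p * r ^ (-(p:ℤ)) else 0 with hx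
  have hx0 : ∀ p, 0 ≤ x p := by
    intro p
    rw [hx]
    dsimp only
    split
    · exact le_of_lt (mul_pos (eCoef_pos m n p hm) (zpow_pos hr _))
    · exact le_refl 0
  have hx00 : x 0 = 0 := by rw [hx]; simp
  have hxN : ∀ p, N < p → x p = 0 := by
    intro p hp
    rw [hx]
    dsimp only
    rw [if_neg (by omega)]
  have hsub : Icc 1 N ⊆ range (N + 1) := by
    intro p hp; rw [Finset.mem_Icc] at hp; rw [Finset.mem_range]; omega
  have hxval : ∀ p ∈ Icc 1 N, x p = eCoef m n p * r ^ (-(p:ℤ)) := by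
    intro p hp
    rw [Finset.mem_Icc] at hp
    rw [hx]
    dsimp only
    rw [if_pos (by omega)]
  have hA : Sq m n r = ∑ p ∈ range (N + 1), x p := by
    unfold Sq
    have step1 : ∑ p ∈ Icc 1 (n+1), eCoef m n p * r ^ (-(p:ℤ)) = ∑ p ∈ Icc 1 N, x p :=
      Finset.sum_congr rfl fun p hp => (hxval p hp).symm
    rw [step1]
    refine Finset.sum_subset hsub fun p hp hp' => ?_
    rw [Finset.mem_range] at hp
    rw [Finset.mem_Icc] at hp'
    rw [hx]
    dsimp only
    rw [if_neg (by omega)]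
  have hB : Sq1 m n r = -(1/r) * ∑ p ∈ range (N + 1), (p:ℝ) * x p := by
    unfold Sq1
    rw [Finset.mul_sum, ← Finset.sum_subset hsub (fun p hp hp' => ?_)]
    · refine Finset.sum_congr rfl fun p hp => ?_
      rw [hxval p hp]
      have hz : r ^ (-(p:ℤ) - 1) = r ^ (-(p:ℤ)) * r⁻¹ := zpow_sub_one₀ hrne _
      rw [hz]
      push_cast
      field_simp
    · rw [Finset.mem_range] at hp
      rw [Finset.mem_Icc] at hp'
      have : p = 0 := by omega
      subst this
      simp
  have hC : Sq2 m n r = (1/r^2) * ∑ p ∈ range (N + 1), ((p:ℝ) * (p+1)) * x p := by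
    unfold Sq2
    rw [Finset.mul_sum, ← Finset.sum_subset hsub (fun p hp hp' => ?_)]
    · refine Finset.sum_congr rfl fun p hp => ?_
      rw [hxval p hp]
      have hz : r ^ (-(p:ℤ) - 1 - 1) = r ^ (-(p:ℤ)) * r⁻¹ * r⁻¹ := by
        rw [zpow_sub_one₀ hrne, zpow_sub_one₀ hrne]
      rw [hz]
      push_cast
      field_simp
      ring
    · rw [Finset.mem_range] at hp
      rw [Finset.mem_Icc] at hp'
      have : p = 0 := by omega
      subst this
      simp
  have hspread : ∀ a a' b' b : ℕ, a ≤ a' → a' ≤ b' → b' ≤ b → a + b = a' + b' →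
      x a * x b ≤ x a' * x b' := by
    intro a a' b' b h1 h2 h3 h4
    by_cases ha : 1 ≤ a ∧ a ≤ N
    · by_cases hb : 1 ≤ b ∧ b ≤ N
      · have ha' : 1 ≤ a' ∧ a' ≤ N := ⟨le_trans ha.1 h1, by omega⟩
        have hb' : 1 ≤ b' ∧ b' ≤ N := ⟨by omega, le_trans h3 hb.2⟩
        rw [hx]
        dsimp only
        rw [if_pos ha, if_pos hb, if_pos ha', if_pos hb']
        have hzz : ∀ u v : ℕ, r ^ (-(u:ℤ)) * r ^ (-(v:ℤ)) = r ^ (-((u+v:ℕ) :ℤ)) := by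
          intro u v
          rw [← zpow_add₀ hrne]
          congr 1
          push_cast
          ring
        have e1 : eCoef m n a * r ^ (-(a:ℤ)) * (eCoef m n b * r ^ (-(b:ℤ)))
            = (eCoef m n a * eCoef m n b) * r ^ (-((a+b:ℕ):ℤ)) := by
          rw [← hzz a b]; ring
        have e2 : eCoef m n a' * r ^ (-(a':ℤ)) * (eCoef m n b' * r ^ (-(b':ℤ)))
            = (eCoef m n a' * eCoef m n b') * r ^ (-((a'+b':ℕ):ℤ)) := by
          rw [← hzz a' b']; ring
        rw [e1, e2, ← h4]
        apply mul_le_mul_of_nonneg_right _ (le_of_lt (zpow_pos hr _))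
        -- product of eCoefs
        unfold eCoef
        rw [div_mul_div_comm, div_mul_div_comm]
        apply div_le_div_of_nonneg_left
        · exact mul_nonneg (cdenom_pos m n hm).le (cdenom_pos m n hm).le
        · exact mul_pos (cdenom_pos m _ hm) (cdenom_pos m _ hm)
        · have := cdenom_spread' m hm (n + 1 - b) (n + 1 - b') (n + 1 - a') (n + 1 - a)
            (by omega) (by omega) (by omega) (by omega)
          calc cdenom m (n + 1 - a') * cdenom m (n + 1 - b')
              = cdenom m (n + 1 - b') * cdenom m (n + 1 - a') := by ring
            _ ≤ cdenom m (n + 1 - b) * cdenom m (n + 1 - a) := this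
            _ = cdenom m (n + 1 - a) * cdenom m (n + 1 - b) := by ring
      · have : x b = 0 := by rw [hx]; dsimp only; rw [if_neg hb]
        rw [this, mul_zero]
        exact mul_nonneg (hx0 _) (hx0 _)
    · have : x a = 0 := by rw [hx]; dsimp only; rw [if_neg ha]
      rw [this, zero_mul]
      exact mul_nonneg (hx0 _) (hx0 _)
  have hcore := core_ineq N x hx0 hx00 hxN hspread
  rw [hA, hB, hC]
  have hr2 : (0:ℝ) < 1 / r ^ 2 := by positivity
  have key2 := mul_le_mul_of_nonneg_left hcore (le_of_lt hr2)
  calc (∑ p ∈ range (N + 1), x p) * (1 / r ^ 2 * ∑ p ∈ range (N + 1), ((p:ℝ) * (p+1)) * x p)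
      = 1 / r ^ 2 * ((∑ p ∈ range (N + 1), x p) * ∑ p ∈ range (N + 1), ((p:ℝ) * (p+1)) * x p) := by
        ring
    _ ≤ 1 / r ^ 2 * (2 * (∑ p ∈ range (N + 1), (p:ℝ) * x p) ^ 2) := key2
    _ = 2 * (-(1/r) * ∑ p ∈ range (N + 1), (p:ℝ) * x p) ^ 2 := by
        field_simp

noncomputable def psiAux (m n : ℕ) (μ : ℝ) : ℝ → ℝ := fun t => μ * (Sq m n (t / μ))⁻¹

noncomputable def psi1 (m n : ℕ) (μ : ℝ) : ℝ → ℝ :=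
  fun t => -(Sq1 m n (t / μ)) / (Sq m n (t / μ)) ^ 2

lemma hasDerivAt_inner (m n : ℕ) (μ : ℝ) (t : ℝ) (hm : 1 ≤ m) (hμ : 0 < μ) (ht : 0 < t) :
    HasDerivAt (fun t => Sq m n (t / μ)) (Sq1 m n (t / μ) * (1 / μ)) t := by
  have hr : 0 < t / μ := div_pos ht hμ
  have h1 : HasDerivAt (fun s : ℝ => s / μ) (1 / μ) t := by
    simpa using (hasDerivAt_id t).div_const μ
  exact (hasDerivAt_Sq m n (t / μ) hr.ne').comp t h1

lemma hasDerivAt_psiAux (m n : ℕ) (μ : ℝ) (t : ℝ) (hm : 1 ≤ m) (hμ : 0 < μ) (ht : 0 < t) :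
    HasDerivAt (psiAux m n μ) (psi1 m n μ t) t := by
  have hr : 0 < t / μ := div_pos ht hμ
  have hS := Sq_pos m n (t / μ) hm hr
  have h3 := ((hasDerivAt_inner m n μ t hm hμ ht).fun_inv hS.ne').const_mul μ
  refine h3.congr_deriv ?_
  unfold psi1
  field_simp

lemma hasDerivAt_psi1 (m n : ℕ) (μ : ℝ) (t : ℝ) (hm : 1 ≤ m) (hμ : 0 < μ) (ht : 0 < t) :
    HasDerivAt (psi1 m n μ)
      ((2 * Sq1 m n (t/μ) ^ 2 - Sq m n (t/μ) * Sq2 m n (t/μ)) / (μ * Sq m n (t/μ) ^ 3)) t := by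
  have hr : 0 < t / μ := div_pos ht hμ
  have hS := Sq_pos m n (t / μ) hm hr
  have h1 : HasDerivAt (fun s : ℝ => s / μ) (1 / μ) t := by
    simpa using (hasDerivAt_id t).div_const μ
  have hnum : HasDerivAt (fun t => -(Sq1 m n (t / μ))) (-(Sq2 m n (t/μ) * (1/μ))) t :=
    by have h := (hasDerivAt_Sq1 m n (t / μ) hr.ne').comp t h1; exact h.fun_neg
  have hden : HasDerivAt (fun t => (Sq m n (t / μ)) ^ 2)
      (2 * Sq m n (t/μ) ^ 1 * (Sq1 m n (t/μ) * (1/μ))) t := by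
    simpa using (hasDerivAt_inner m n μ t hm hμ ht).fun_pow 2
  have hd2 : (Sq m n (t/μ)) ^ 2 ≠ 0 := by positivity
  have := hnum.fun_div hden hd2
  refine this.congr_deriv ?_
  field_simp
  ring

lemma psi1_deriv_nonneg (m n : ℕ) (μ : ℝ) (t : ℝ) (hm : 1 ≤ m) (hμ : 0 < μ) (ht : 0 < t) :
    0 ≤ (2 * Sq1 m n (t/μ) ^ 2 - Sq m n (t/μ) * Sq2 m n (t/μ)) / (μ * Sq m n (t/μ) ^ 3) := by
  have hr : 0 < t / μ := div_pos ht hμ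
  have hS := Sq_pos m n (t / μ) hm hr
  have hkey := key_sign m n hm (t/μ) hr
  apply div_nonneg
  · linarith
  · positivity

lemma den_pos (m n : ℕ) (r : ℝ) (hm : 1 ≤ m) (hr : 0 < r) :
    0 < ∑ j ∈ range (n + 1), aCoef m j r := by
  apply Finset.sum_pos
  · intro j _
    rw [aCoef_eq m j r hm]
    exact div_pos (pow_pos hr j) (cdenom_pos m j hm)
  · exact ⟨0, by simp⟩

lemma Sq_reindex (m n : ℕ) (r : ℝ) (hm : 1 ≤ m) (hr : 0 < r) :
    Sq m n r = cdenom m n * r ^ (-((n:ℤ) + 1)) * ∑ j ∈ range (n + 1), aCoef m j r := by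
  have hrne : r ≠ 0 := hr.ne'
  unfold Sq
  rw [Finset.mul_sum]
  apply Finset.sum_nbij' (i := fun p => n + 1 - p) (j := fun j => n + 1 - j)
  · intro p hp
    rw [Finset.mem_Icc] at hp
    rw [Finset.mem_range]
    omega
  · intro j hj
    rw [Finset.mem_range] at hj
    rw [Finset.mem_Icc]
    omega
  · intro p hp
    rw [Finset.mem_Icc] at hp
    omega
  · intro j hj
    rw [Finset.mem_range] at hj
    omega
  · intro p hp
    rw [Finset.mem_Icc] at hp
    rw [aCoef_eq m _ r hm]
    unfold eCoef
    rw [← zpow_natCast r (n + 1 - p)]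
    have hz : cdenom m n * r ^ (-((n:ℤ)+1)) * (r ^ (((n+1-p : ℕ)):ℤ) / cdenom m (n+1-p))
        = (cdenom m n / cdenom m (n+1-p)) * (r ^ (-((n:ℤ)+1)) * r ^ (((n+1-p : ℕ)):ℤ)) := by
      ring
    rw [hz, ← zpow_add₀ hrne]
    have he : -((n:ℤ)+1) + ((n+1-p : ℕ) : ℤ) = -(p:ℤ) := by omega
    rw [he]

lemma phi_eq_psi (m n : ℕ) (μ t : ℝ) (hm : 1 ≤ m) (hμ : 0 < μ) (ht : 0 < t) :
    t * Bmn m n (t / μ) = psiAux m n μ t := by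
  set r := t / μ with hrdef
  have hr : 0 < r := div_pos ht hμ
  have hrne : r ≠ 0 := hr.ne'
  have hden := den_pos m n r hm hr
  have hcn := cdenom_pos m n hm
  unfold Bmn psiAux
  rw [Sq_reindex m n r hm hr, aCoef_eq m n r hm]
  rw [mul_inv, mul_inv]
  have hz1 : (r ^ (-((n:ℤ) + 1)))⁻¹ = r ^ ((n:ℤ) + 1) := by
    rw [← zpow_neg, neg_neg]
  rw [hz1]
  have hz2 : r ^ ((n:ℤ) + 1) = r ^ n * r := by
    rw [← zpow_natCast r n, ← zpow_add_one₀ hrne]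
  rw [hz2]
  have htr : t = μ * r := by
    rw [hrdef]
    field_simp
  rw [htr]
  field_simp

/-- Convexity of the objective on `[0,∞)`. -/
lemma convexOn_phi (m n : ℕ) (μ : ℝ) (φ : ℝ → ℝ) (hm : 1 ≤ m) (hμ : 0 < μ)
    (hφpos : ∀ t : ℝ, 0 < t → φ t = t * Bmn m n (t / μ))
    (hcont : ContinuousOn φ (Set.Ici 0)) :
    ConvexOn ℝ (Set.Ici 0) φ := by
  have heq : ∀ t : ℝ, 0 < t → φ =ᶠ[nhds t] psiAux m n μ := by
    intro t ht
    filter_upwards [Ioi_mem_nhds ht] with s hs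
    rw [hφpos s hs, phi_eq_psi m n μ s hm hμ hs]
  have hderiv_eq : ∀ t : ℝ, 0 < t → deriv φ t = psi1 m n μ t := by
    intro t ht
    rw [(heq t ht).deriv_eq]
    exact (hasDerivAt_psiAux m n μ t hm hμ ht).deriv
  have hderiv_eventually : ∀ t : ℝ, 0 < t → deriv φ =ᶠ[nhds t] psi1 m n μ := by
    intro t ht
    filter_upwards [Ioi_mem_nhds ht] with s hs
    exact hderiv_eq s hs
  apply convexOn_of_deriv2_nonneg (convex_Ici 0) hcont
  · rw [interior_Ici]
    intro t ht
    exact ((hasDerivAt_psiAux m n μ t hm hμ ht).differentiableAt.congr_of_eventuallyEq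
      (heq t ht)).differentiableWithinAt
  · rw [interior_Ici]
    intro t ht
    exact ((hasDerivAt_psi1 m n μ t hm hμ ht).differentiableAt.congr_of_eventuallyEq
      (hderiv_eventually t ht)).differentiableWithinAt
  · rw [interior_Ici]
    intro t ht
    have h2 : deriv (deriv φ) t = deriv (psi1 m n μ) t := (hderiv_eventually t ht).deriv_eq
    have : deriv^[2] φ t = deriv (deriv φ) t := by
      simp [Function.iterate_succ, Function.iterate_one]
    rw [this, h2, (hasDerivAt_psi1 m n μ t hm hμ ht).deriv]
    exact psi1_deriv_nonneg m n μ t hm hμ ht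

end QueueAuxA

section QueueAuxB
open Set Filter

/-- Tangent line lies below a convex function. -/
lemma tangent_line (f : ℝ → ℝ) (d x y : ℝ) (hconv : ConvexOn ℝ (Set.Ici 0) f)
    (hx : x ∈ Set.Ici (0:ℝ)) (hy : y ∈ Set.Ici (0:ℝ))
    (hd : HasDerivWithinAt f d (Set.Ici 0) x) : d * (y - x) ≤ f y - f x := by
  rcases eq_or_ne y x with rfl | hne
  · simp
  have hmono := hconv.slope_mono hx
  have hslope : Tendsto (slope f x) (nhdsWithin x (Set.Ici 0 \ {x})) (nhds d) :=
    hasDerivWithinAt_iff_tendsto_slope.1 hd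
  have hsub : Set.Ioi x ⊆ Set.Ici 0 \ {x} := by
    intro z hz
    rw [Set.mem_Ioi] at hz
    exact ⟨le_trans hx (le_of_lt hz), ne_of_gt hz⟩
  have hnebot : (nhdsWithin x (Set.Ici 0 \ {x})).NeBot :=
    (nhdsGT_neBot x).mono (nhdsWithin_mono x hsub)
  have hymem : y ∈ Set.Ici 0 \ {x} := ⟨hy, hne⟩
  rcases lt_or_gt_of_ne hne with hlt | hgt
  · -- y < x
    have key : slope f x y ≤ d := by
      apply ge_of_tendsto hslope
      filter_upwards [self_mem_nhdsWithin,
        mem_nhdsWithin_of_mem_nhds (Ioi_mem_nhds hlt)] with z hz hz'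
      exact hmono hymem hz (le_of_lt hz')
    rw [slope_def_field] at key
    exact (div_le_iff_of_neg (by linarith)).1 key
  · -- x < y
    have key : d ≤ slope f x y := by
      apply le_of_tendsto hslope
      filter_upwards [self_mem_nhdsWithin,
        mem_nhdsWithin_of_mem_nhds (Iio_mem_nhds hgt)] with z hz hz'
      exact hmono hz hymem (le_of_lt hz')
    rw [slope_def_field] at key
    exact (le_div_iff₀ (by linarith)).1 key

end QueueAuxB

section QueueAuxC
open Set Filter Finset

lemma exchange_ineq {K : ℕ} (lam : ℝ) (φ : Fin K → ℝ → ℝ) (D : Fin K → ℝ → ℝ)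
    (hD : ∀ k, ∀ t ∈ Set.Ici (0:ℝ), HasDerivWithinAt (φ k) (D k t) (Set.Ici (0:ℝ)) t)
    (v : Fin K → ℝ) (hv0 : ∀ k, v k ∈ Set.Icc (0:ℝ) lam) (hvsum : ∑ k, v k = lam)
    (Hmin : ∀ w : Fin K → ℝ, ((∀ k, w k ∈ Set.Icc (0:ℝ) lam) ∧ ∑ k, w k = lam) →
        ∑ k, φ k (v k) ≤ ∑ k, φ k (w k))
    (j k : Fin K) (hjk : j ≠ k) (hk : 0 < v k) (hj : v j < lam) :
    D k (v k) ≤ D j (v j) := by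
  set δ : ℝ := min (v k) (lam - v j) with hδdef
  have hδ : 0 < δ := lt_min hk (by linarith)
  set h : ℝ → ℝ := fun ε => φ j (v j + ε) + φ k (v k - ε) with hh
  have hvj0 : (0:ℝ) ≤ v j := (hv0 j).1
  have hvk0 : (0:ℝ) ≤ v k := (hv0 k).1
  -- derivative of h at 0 within [0, δ]
  have part1 : HasDerivWithinAt (fun ε => φ j (v j + ε)) (D j (v j) * 1) (Set.Icc 0 δ) 0 := by
    have inner : HasDerivWithinAt (fun ε : ℝ => v j + ε) 1 (Set.Icc 0 δ) 0 :=
      ((hasDerivAt_id (0:ℝ)).const_add (v j)).hasDerivWithinAt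
    have maps : Set.MapsTo (fun ε : ℝ => v j + ε) (Set.Icc 0 δ) (Set.Ici 0) := by
      intro ε hε
      have := hε.1
      simp only [Set.mem_Ici]
      linarith
    have houter : HasDerivWithinAt (φ j) (D j (v j)) (Set.Ici 0) ((fun ε : ℝ => v j + ε) 0) := by
      simpa using hD j (v j) (Set.mem_Ici.2 hvj0)
    exact houter.comp 0 inner maps
  have part2 : HasDerivWithinAt (fun ε => φ k (v k - ε)) (D k (v k) * (-1)) (Set.Icc 0 δ) 0 := by
    have inner : HasDerivWithinAt (fun ε : ℝ => v k - ε) (-1) (Set.Icc 0 δ) 0 :=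
      ((hasDerivAt_id (0:ℝ)).const_sub (v k)).hasDerivWithinAt
    have maps : Set.MapsTo (fun ε : ℝ => v k - ε) (Set.Icc 0 δ) (Set.Ici 0) := by
      intro ε hε
      have h1 := hε.2
      have h2 : δ ≤ v k := min_le_left _ _
      simp only [Set.mem_Ici]
      linarith
    have houter : HasDerivWithinAt (φ k) (D k (v k)) (Set.Ici 0) ((fun ε : ℝ => v k - ε) 0) := by
      simpa using hD k (v k) (Set.mem_Ici.2 hvk0)
    exact houter.comp 0 inner maps
  have hdh : HasDerivWithinAt h (D j (v j) - D k (v k)) (Set.Icc 0 δ) 0 := by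
    have := part1.fun_add part2
    refine this.congr_deriv ?_
    ring
  -- h attains its min at 0 on [0, δ]
  have hmin : ∀ ε ∈ Set.Icc (0:ℝ) δ, h 0 ≤ h ε := by
    intro ε hε
    obtain ⟨hε0, hεδ⟩ := hε
    have hδk : δ ≤ v k := min_le_left _ _
    have hδj : δ ≤ lam - v j := min_le_right _ _
    set w : Fin K → ℝ := fun i => if i = j then v j + ε else if i = k then v k - ε else v i
      with hw
    have hwfeas : (∀ i, w i ∈ Set.Icc (0:ℝ) lam) ∧ ∑ i, w i = lam := by
      constructor
      · intro i
        rw [hw]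
        dsimp only
        by_cases h1 : i = j
        · rw [if_pos h1]
          constructor <;> [linarith; linarith]
        · rw [if_neg h1]
          by_cases h2 : i = k
          · rw [if_pos h2]
            have := (hv0 k).2
            constructor <;> [linarith; linarith]
          · rw [if_neg h2]
            exact hv0 i
      · have hweq : ∀ i, w i = v i + ((if i = j then ε else 0) - (if i = k then ε else 0)) := by
          intro i
          rw [hw]
          dsimp only
          by_cases h1 : i = j
          · subst h1
            rw [if_pos rfl, if_pos rfl, if_neg hjk]
            ring
          · rw [if_neg h1, if_neg h1]
            by_cases h2 : i = k
            · subst h2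
              rw [if_pos rfl, if_pos rfl]
              ring
            · rw [if_neg h2, if_neg h2]
              ring
        rw [Finset.sum_congr rfl fun i _ => hweq i, Finset.sum_add_distrib,
          Finset.sum_sub_distrib, Finset.sum_ite_eq' Finset.univ j (fun _ => ε),
          Finset.sum_ite_eq' Finset.univ k (fun _ => ε)]
        simp [hvsum]
    have hHm := Hmin w hwfeas
    -- split both sums
    have split : ∀ f : Fin K → ℝ, ∑ i, f i
        = f j + f k + ∑ i ∈ (Finset.univ.erase j).erase k, f i := by
      intro f
      have h1 : k ∈ Finset.univ.erase j := Finset.mem_erase.2 ⟨fun hc => hjk hc.symm, Finset.mem_univ k⟩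
      rw [← Finset.sum_erase_add Finset.univ f (Finset.mem_univ j),
        ← Finset.sum_erase_add (Finset.univ.erase j) f h1]
      ring
    rw [split (fun i => φ i (v i)), split (fun i => φ i (w i))] at hHm
    have hcompl : ∑ i ∈ (Finset.univ.erase j).erase k, φ i (w i)
        = ∑ i ∈ (Finset.univ.erase j).erase k, φ i (v i) := by
      refine Finset.sum_congr rfl fun i hi => ?_
      rw [Finset.mem_erase, Finset.mem_erase] at hi
      rw [hw]
      dsimp only
      rw [if_neg hi.2.1, if_neg hi.1]
    have hwj : w j = v j + ε := by rw [hw]; dsimp only; rw [if_pos rfl]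
    have hwk : w k = v k - ε := by rw [hw]; dsimp only; rw [if_neg (fun hc => hjk hc.symm), if_pos rfl]
    rw [hcompl, hwj, hwk] at hHm
    rw [hh]
    dsimp only
    simp only [add_zero, sub_zero]
    linarith
  -- one-sided derivative at a boundary minimum is nonnegative
  have hslope : Tendsto (slope h 0) (nhdsWithin 0 (Set.Icc 0 δ \ {0}))
      (nhds (D j (v j) - D k (v k))) := hasDerivWithinAt_iff_tendsto_slope.1 hdh
  have hsub : Set.Ioc 0 δ ⊆ Set.Icc 0 δ \ {0} := by
    intro z hz
    exact ⟨⟨le_of_lt hz.1, hz.2⟩, ne_of_gt hz.1⟩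
  have hnebot : (nhdsWithin 0 (Set.Icc 0 δ \ {0})).NeBot := by
    have h1 : (nhdsWithin (0:ℝ) (Set.Ioc 0 δ)).NeBot := by
      rw [nhdsWithin_Ioc_eq_nhdsGT hδ]
      exact nhdsGT_neBot 0
    exact h1.mono (nhdsWithin_mono 0 hsub)
  have hge : 0 ≤ D j (v j) - D k (v k) := by
    apply ge_of_tendsto hslope
    filter_upwards [self_mem_nhdsWithin] with ε hε
    obtain ⟨hε1, hε2⟩ := hε
    have hεpos : 0 < ε := lt_of_le_of_ne hε1.1 (fun hc => hε2 hc.symm)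
    rw [slope_def_field]
    apply div_nonneg
    · have := hmin ε hε1
      linarith
    · linarith
  linarith

end QueueAuxC

/-- KKT characterization of minimizers of the OBS nonlinear program. -/
theorem stmt_6 (K : ℕ) (hK : 1 ≤ K) (lam : ℝ) (hlam : 0 < lam)
    (m n : Fin K → ℕ) (μ : Fin K → ℝ)
    (hm : ∀ k, 1 ≤ m k) (hn : ∀ k, m k ≤ n k) (hμ : ∀ k, 0 < μ k)
    (φ : Fin K → ℝ → ℝ) (hφ0 : ∀ k, φ k 0 = 0)
    (hφ : ∀ k, ∀ t : ℝ, 0 < t → φ k t = t * Bmn (m k) (n k) (t / μ k))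
    -- each `φ k` is continuously differentiable on `[0,∞)`, with derivative `D k`
    (D : Fin K → ℝ → ℝ)
    (hD : ∀ k, ∀ t ∈ Set.Ici (0 : ℝ), HasDerivWithinAt (φ k) (D k t) (Set.Ici (0 : ℝ)) t)
    (hDcont : ∀ k, ContinuousOn (D k) (Set.Ici (0 : ℝ)))
    -- a feasible point
    (v : Fin K → ℝ) (hv : (∀ k, v k ∈ Set.Icc (0 : ℝ) lam) ∧ ∑ k, v k = lam) :
    (∀ w : Fin K → ℝ, ((∀ k, w k ∈ Set.Icc (0 : ℝ) lam) ∧ ∑ k, w k = lam) →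
        ∑ k, φ k (v k) ≤ ∑ k, φ k (w k)) ↔
      ∃ y : ℝ, ∀ k,
        (v k = 0 → y ≤ D k (v k)) ∧
        (0 < v k → v k < lam → D k (v k) = y) ∧
        (v k = lam → D k (v k) ≤ y) := by
  obtain ⟨hv0, hvsum⟩ := hv
  constructor
  · -- minimizer ⇒ KKT multiplier exists
    intro Hmin
    have hPne : (Finset.univ.filter (fun k : Fin K => 0 < v k)).Nonempty := by
      by_contra hc
      rw [Finset.not_nonempty_iff_eq_empty] at hc
      have hall : ∀ k, v k ≤ 0 := by
        intro k
        by_contra hk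
        push_neg at hk
        have hmem : k ∈ Finset.univ.filter (fun k : Fin K => 0 < v k) :=
          Finset.mem_filter.2 ⟨Finset.mem_univ k, hk⟩
        rw [hc] at hmem
        exact absurd hmem (Finset.notMem_empty k)
      have : ∑ k, v k ≤ 0 := Finset.sum_nonpos (fun k _ => hall k)
      rw [hvsum] at this
      linarith
    refine ⟨(Finset.univ.filter (fun k : Fin K => 0 < v k)).sup' hPne (fun k => D k (v k)),
      fun k => ⟨?_, ?_, ?_⟩⟩
    · intro hk0
      apply Finset.sup'_le
      intro j hj
      rw [Finset.mem_filter] at hj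
      have hjk : k ≠ j := by
        intro hc
        rw [← hc] at hj
        rw [hk0] at hj
        exact lt_irrefl 0 hj.2
      exact exchange_ineq lam φ D hD v hv0 hvsum Hmin k j hjk hj.2 (by rw [hk0]; exact hlam)
    · intro hk0 hklam
      apply le_antisymm
      · exact Finset.le_sup' (fun k => D k (v k)) (Finset.mem_filter.2 ⟨Finset.mem_univ k, hk0⟩)
      · apply Finset.sup'_le
        intro j hj
        rw [Finset.mem_filter] at hj
        by_cases hjk : j = k
        · rw [hjk]
        · exact exchange_ineq lam φ D hD v hv0 hvsum Hmin k j
            (fun hc => hjk hc.symm) hj.2 hklam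
    · intro hklam
      exact Finset.le_sup' (fun k => D k (v k)) (Finset.mem_filter.2 ⟨Finset.mem_univ k, by rw [hklam]; exact hlam⟩)
  · -- KKT ⇒ minimizer (uses convexity)
    rintro ⟨y, hy⟩ w ⟨hw0, hwsum⟩
    have hconv : ∀ k, ConvexOn ℝ (Set.Ici 0) (φ k) := fun k =>
      convexOn_phi (m k) (n k) (μ k) (φ k) (hm k) (hμ k) (fun t ht => hφ k t ht)
        (fun t ht => (hD k t ht).continuousWithinAt)
    have key : ∀ k, y * (w k - v k) ≤ φ k (w k) - φ k (v k) := by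
      intro k
      have htan := tangent_line (φ k) (D k (v k)) (v k) (w k) (hconv k)
        (Set.mem_Ici.2 (hv0 k).1) (Set.mem_Ici.2 (hw0 k).1)
        (hD k (v k) (Set.mem_Ici.2 (hv0 k).1))
      have hDy : y * (w k - v k) ≤ D k (v k) * (w k - v k) := by
        rcases lt_trichotomy (w k) (v k) with hlt | heq | hgt
        · have hvk : 0 < v k := lt_of_le_of_lt (hw0 k).1 hlt
          have hDle : D k (v k) ≤ y := by
            rcases eq_or_lt_of_le (hv0 k).2 with heq2 | hlt2
            · exact (hy k).2.2 heq2
            · exact le_of_eq ((hy k).2.1 hvk hlt2)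
          nlinarith
        · rw [heq]
          simp
        · have hvk : v k < lam := lt_of_lt_of_le hgt (hw0 k).2
          have hyle : y ≤ D k (v k) := by
            rcases eq_or_lt_of_le (hv0 k).1 with heq2 | hlt2
            · exact (hy k).1 heq2.symm
            · exact le_of_eq ((hy k).2.1 hlt2 hvk).symm
          nlinarith
      linarith
    have hsum := Finset.sum_le_sum (s := Finset.univ) (fun k _ => key k)
    rw [Finset.sum_sub_distrib] at hsum
    have hzero : ∑ k, y * (w k - v k) = 0 := by
      rw [← Finset.mul_sum, Finset.sum_sub_distrib, hwsum, hvsum]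
      ring
    rw [hzero] at hsum
    linarith
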